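/- arXiv:1105.0434 — 4 statements merged into one kernel-verified Lean document; each statement's English description precedes it below -/
import Mathlib

section
/- Let H be a coribbon Hopf algebra, χ ∈ H a dual trace (i.e., Δᵒᵖ(χ) = Δ(χ)), and w : H → k the copivotal form. Then the element t = w(χ⁽¹⁾)·χ⁽²⁾ is a dual quantum trace, i.e., Δᵒᵖ(t) = (id ⊗ S²)(Δ(t)). -/
open TensorProduct

/-- Convolution product of linear forms on a bialgebra. -/
noncomputable def conv {k H : Type*} [CommSemiring k] [Semiring H] [Bialgebra k H]
    (f g : H →ₗ[k] k) : H →ₗ[k] k :=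
  LinearMap.mul' k k ∘ₗ TensorProduct.map f g ∘ₗ Coalgebra.comul

/-- `x ↦ f(x⁽¹⁾)·x⁽²⁾`. -/
noncomputable def actL {k H : Type*} [CommSemiring k] [Semiring H] [Bialgebra k H]
    (f : H →ₗ[k] k) : H →ₗ[k] H :=
  (TensorProduct.lid k H).toLinearMap ∘ₗ TensorProduct.map f LinearMap.id ∘ₗ Coalgebra.comul

/-- `x ↦ x⁽¹⁾·f(x⁽²⁾)`. -/
noncomputable def actR {k H : Type*} [CommSemiring k] [Semiring H] [Bialgebra k H]
    (f : H →ₗ[k] k) : H →ₗ[k] H :=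
  (TensorProduct.rid k H).toLinearMap ∘ₗ TensorProduct.map LinearMap.id f ∘ₗ Coalgebra.comul

namespace DTAux

open Coalgebra LinearMap

variable (k H : Type*) [CommSemiring k] [Semiring H] [Bialgebra k H]

/-- iterated comultiplication, 3 tensor factors -/
noncomputable def D2 : H →ₗ[k] H ⊗[k] (H ⊗[k] H) :=
  lTensor H (comul (R := k)) ∘ₗ comul

/-- iterated comultiplication, 4 tensor factors -/
noncomputable def D3 : H →ₗ[k] H ⊗[k] (H ⊗[k] (H ⊗[k] H)) :=
  lTensor H (D2 k H) ∘ₗ comul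

/-- iterated comultiplication, 5 tensor factors -/
noncomputable def D4 : H →ₗ[k] H ⊗[k] (H ⊗[k] (H ⊗[k] (H ⊗[k] H))) :=
  lTensor H (D3 k H) ∘ₗ comul

/-- reassociator -/
noncomputable def beta3 :
    H ⊗[k] (H ⊗[k] (H ⊗[k] H)) →ₗ[k] (H ⊗[k] (H ⊗[k] H)) ⊗[k] H :=
  (TensorProduct.assoc k H (H ⊗[k] H) H).symm.toLinearMap ∘ₗ
    lTensor H (TensorProduct.assoc k H H H).symm.toLinearMap

/-- reassociator -/
noncomputable def beta4 :
    H ⊗[k] (H ⊗[k] (H ⊗[k] (H ⊗[k] H))) →ₗ[k]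
      (H ⊗[k] (H ⊗[k] (H ⊗[k] H))) ⊗[k] H :=
  (TensorProduct.assoc k H (H ⊗[k] (H ⊗[k] H)) H).symm.toLinearMap ∘ₗ
    lTensor H (beta3 k H)

/-- rotation of the 5-fold tensor, last factor to front -/
noncomputable def rho :
    H ⊗[k] (H ⊗[k] (H ⊗[k] (H ⊗[k] H))) →ₗ[k]
      H ⊗[k] (H ⊗[k] (H ⊗[k] (H ⊗[k] H))) :=
  (TensorProduct.comm k (H ⊗[k] (H ⊗[k] (H ⊗[k] H))) H).toLinearMap ∘ₗ beta4 k H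

@[simp] lemma rho_tmul (a b c d e : H) :
    rho k H (a ⊗ₜ[k] (b ⊗ₜ[k] (c ⊗ₜ[k] (d ⊗ₜ[k] e)))) =
      e ⊗ₜ[k] (a ⊗ₜ[k] (b ⊗ₜ[k] (c ⊗ₜ[k] d))) := by
  simp [rho, beta4, beta3]

/-- naturality of associator -/
lemma natur {A B : Type*} [AddCommMonoid A] [AddCommMonoid B] [Module k A] [Module k B]
    (f : A →ₗ[k] B) :
    rTensor H (lTensor H f) ∘ₗ (TensorProduct.assoc k H A H).symm.toLinearMap =
      (TensorProduct.assoc k H B H).symm.toLinearMap ∘ₗ lTensor H (rTensor H f) := by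
  ext x y z
  simp

lemma comm_nat {A : Type*} [AddCommMonoid A] [Module k A] (f : H →ₗ[k] A) :
    lTensor H f ∘ₗ (TensorProduct.comm k H H).toLinearMap =
      (TensorProduct.comm k A H).toLinearMap ∘ₗ rTensor H f := by
  ext x y
  simp

/-- coassociativity, level 1 -/
lemma CA1 : rTensor H (comul (R := k) (A := H)) ∘ₗ comul =
    (TensorProduct.assoc k H H H).symm.toLinearMap ∘ₗ D2 k H := by
  rw [D2, LinearEquiv.eq_toLinearMap_symm_comp]
  exact Coalgebra.coassoc

/-- coassociativity, level 2 -/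
lemma CA2 : rTensor H (D2 k H) ∘ₗ comul = beta3 k H ∘ₗ D3 k H := by
  calc rTensor H (D2 k H) ∘ₗ comul
      = rTensor H (lTensor H comul) ∘ₗ (rTensor H comul ∘ₗ comul) := by
        rw [D2, rTensor_comp]; rfl
    _ = rTensor H (lTensor H comul) ∘ₗ
          ((TensorProduct.assoc k H H H).symm.toLinearMap ∘ₗ D2 k H) := by rw [CA1]
    _ = ((rTensor H (lTensor H comul) ∘ₗ
          (TensorProduct.assoc k H H H).symm.toLinearMap) ∘ₗ lTensor H comul) ∘ₗ comul := by
        rw [D2]; rfl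
    _ = (((TensorProduct.assoc k H (H ⊗[k] H) H).symm.toLinearMap ∘ₗ
          lTensor H (rTensor H comul)) ∘ₗ lTensor H comul) ∘ₗ comul := by rw [natur]
    _ = (TensorProduct.assoc k H (H ⊗[k] H) H).symm.toLinearMap ∘ₗ
          lTensor H (rTensor H comul ∘ₗ comul) ∘ₗ comul := by
        rw [lTensor_comp]; rfl
    _ = (TensorProduct.assoc k H (H ⊗[k] H) H).symm.toLinearMap ∘ₗ
          lTensor H ((TensorProduct.assoc k H H H).symm.toLinearMap ∘ₗ D2 k H) ∘ₗ comul := by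
        rw [CA1]
    _ = beta3 k H ∘ₗ D3 k H := by
        rw [beta3, D3, lTensor_comp]; rfl

/-- coassociativity, level 3 -/
lemma CA3 : rTensor H (D3 k H) ∘ₗ comul = beta4 k H ∘ₗ D4 k H := by
  calc rTensor H (D3 k H) ∘ₗ comul
      = rTensor H (lTensor H (D2 k H)) ∘ₗ (rTensor H comul ∘ₗ comul) := by
        rw [D3, rTensor_comp]; rfl
    _ = rTensor H (lTensor H (D2 k H)) ∘ₗ
          ((TensorProduct.assoc k H H H).symm.toLinearMap ∘ₗ D2 k H) := by rw [CA1]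
    _ = ((rTensor H (lTensor H (D2 k H)) ∘ₗ
          (TensorProduct.assoc k H H H).symm.toLinearMap) ∘ₗ lTensor H comul) ∘ₗ comul := by
        rw [D2]; rfl
    _ = (((TensorProduct.assoc k H (H ⊗[k] (H ⊗[k] H)) H).symm.toLinearMap ∘ₗ
          lTensor H (rTensor H (D2 k H))) ∘ₗ lTensor H comul) ∘ₗ comul := by rw [natur]
    _ = (TensorProduct.assoc k H (H ⊗[k] (H ⊗[k] H)) H).symm.toLinearMap ∘ₗ
          lTensor H (rTensor H (D2 k H) ∘ₗ comul) ∘ₗ comul := by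
        rw [lTensor_comp]; rfl
    _ = (TensorProduct.assoc k H (H ⊗[k] (H ⊗[k] H)) H).symm.toLinearMap ∘ₗ
          lTensor H (beta3 k H ∘ₗ D3 k H) ∘ₗ comul := by
        rw [CA2]
    _ = beta4 k H ∘ₗ D4 k H := by
        rw [beta4, D4, lTensor_comp]; rfl

end DTAux

/-- Let `H` be a Hopf algebra with a copivotal form `w` (a convolution-invertible algebra
homomorphism with `S² = w ⇀ · ↼ w̄`).  If `χ ∈ H` is a dual trace (`Δᵒᵖ(χ) = Δ(χ)`),
then `t = w(χ⁽¹⁾)·χ⁽²⁾` is a dual quantum trace: `Δᵒᵖ(t) = (id ⊗ S²)(Δ(t))`. -/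
theorem dual_trace_gives_dual_quantum_trace
    {k H : Type*} [Field k] [Ring H] [HopfAlgebra k H]
    (w : H →ₐ[k] k) (wbar : H →ₗ[k] k)
    (hw1 : conv w.toLinearMap wbar = Coalgebra.counit)
    (hw2 : conv wbar w.toLinearMap = Coalgebra.counit)
    (hS2 : (HopfAlgebra.antipode k : H →ₗ[k] H) ∘ₗ HopfAlgebra.antipode k
      = actR wbar ∘ₗ actL w.toLinearMap)
    (χ : H) (hχ : TensorProduct.comm k H H (Coalgebra.comul χ) = Coalgebra.comul χ) :
    TensorProduct.comm k H H (Coalgebra.comul (actL w.toLinearMap χ)) =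
      TensorProduct.map LinearMap.id
        ((HopfAlgebra.antipode k : H →ₗ[k] H) ∘ₗ HopfAlgebra.antipode k)
        (Coalgebra.comul (actL w.toLinearMap χ)) := by
  open Coalgebra LinearMap DTAux in
  -- notation
  set ww : H →ₗ[k] k := w.toLinearMap with hww
  -- `Lw (a ⊗ u) = w a • u`
  set Lw : H ⊗[k] (H ⊗[k] H) →ₗ[k] H ⊗[k] H :=
    (TensorProduct.lid k (H ⊗[k] H)).toLinearMap ∘ₗ map ww LinearMap.id with hLw
  -- `C (a ⊗ (b ⊗ c)) = w a • (c ⊗ b)`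
  set C : H ⊗[k] (H ⊗[k] H) →ₗ[k] H ⊗[k] H :=
    (TensorProduct.lid k (H ⊗[k] H)).toLinearMap ∘ₗ
      map ww (TensorProduct.comm k H H).toLinearMap with hC
  -- `contr (a ⊗ (b ⊗ c)) = (wbar a * w b) • c`
  set contr : H ⊗[k] (H ⊗[k] H) →ₗ[k] H :=
    (TensorProduct.lid k H).toLinearMap ∘ₗ
      map wbar ((TensorProduct.lid k H).toLinearMap ∘ₗ map ww LinearMap.id) with hcontr
  -- `contr2 (a ⊗ (b ⊗ c)) = (w a * wbar c) • b`
  set contr2 : H ⊗[k] (H ⊗[k] H) →ₗ[k] H :=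
    (TensorProduct.rid k H).toLinearMap ∘ₗ map LinearMap.id wbar ∘ₗ
      (TensorProduct.lid k (H ⊗[k] H)).toLinearMap ∘ₗ map ww LinearMap.id with hcontr2
  -- push `comul` past the contraction of the first tensor factor
  have h1 : comul ∘ₗ (TensorProduct.lid k H).toLinearMap ∘ₗ map ww LinearMap.id
      = Lw ∘ₗ lTensor H (comul (R := k)) := by
    ext x y
    simp [hLw]
  -- `comm ∘ Lw = C`
  have h2 : (TensorProduct.comm k H H).toLinearMap ∘ₗ Lw = C := by
    ext x y z
    simp [hLw, hC]
  -- `map id f ∘ Lw = Lw ∘ (id ⊗ id ⊗ f)`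
  have h3 : ∀ f : H →ₗ[k] H,
      map LinearMap.id f ∘ₗ Lw = Lw ∘ₗ lTensor H (lTensor H f) := by
    intro f
    ext x y z
    simp [hLw]
  -- the key pure-tensor computation (uses commutativity of `k`)
  have h6 : Lw ∘ₗ lTensor H (lTensor H contr2) ∘ₗ rho k H ∘ₗ rho k H
      = C ∘ₗ lTensor H (lTensor H contr) := by
    ext a b c d e
    simp [hLw, hC, hcontr, hcontr2, smul_smul]
    congr 1
    ring
  -- `comul t = Lw (D2 χ)`
  have key1 : comul (actL ww χ) = Lw (D2 k H χ) := by
    have := LinearMap.congr_fun h1 (comul χ)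
    simpa [actL, D2] using this
  -- `S² = contr2 ∘ D2`
  have hS2' : actR wbar ∘ₗ actL ww = contr2 ∘ₗ D2 k H := by
    calc actR wbar ∘ₗ actL ww
        = ((TensorProduct.rid k H).toLinearMap ∘ₗ map LinearMap.id wbar) ∘ₗ
            (comul ∘ₗ (TensorProduct.lid k H).toLinearMap ∘ₗ map ww LinearMap.id) ∘ₗ
            comul := rfl
      _ = ((TensorProduct.rid k H).toLinearMap ∘ₗ map LinearMap.id wbar) ∘ₗ
            (Lw ∘ₗ lTensor H (comul (R := k))) ∘ₗ comul := by rw [h1]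
      _ = contr2 ∘ₗ D2 k H := rfl
  -- rotation invariance of `D4 χ`
  have hrot : rho k H (D4 k H χ) = D4 k H χ := by
    have e3 := LinearMap.congr_fun (CA3 k H) χ
    have ecn := LinearMap.congr_fun (comm_nat k H (D3 k H)) (comul χ)
    simp only [LinearMap.comp_apply, LinearEquiv.coe_coe] at e3 ecn
    have : rho k H (D4 k H χ) =
        (TensorProduct.comm k (H ⊗[k] (H ⊗[k] (H ⊗[k] H))) H) (beta4 k H (D4 k H χ)) := rfl
    rw [this, ← e3, ← ecn, hχ]
    rfl
  -- `D4 = (id ⊗ id ⊗ D2) ∘ D2`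
  have hD4 : D4 k H χ = lTensor H (lTensor H (D2 k H)) (D2 k H χ) := by
    have : D4 k H = lTensor H (lTensor H (D2 k H)) ∘ₗ D2 k H := by
      rw [D4, D3, lTensor_comp, D2]
      rfl
    rw [this]; rfl
  -- `contr ∘ D2 = actL (conv wbar w)`
  have hpure : contr = (TensorProduct.lid k H).toLinearMap ∘ₗ
      map (LinearMap.mul' k k ∘ₗ map wbar ww) LinearMap.id ∘ₗ
      (TensorProduct.assoc k H H H).symm.toLinearMap := by
    ext x y z
    simp [hcontr, mul_smul]
    try exact smul_comm _ _ _
  have hA : contr ∘ₗ D2 k H = actL (conv wbar ww) := by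
    rw [hpure]
    calc ((TensorProduct.lid k H).toLinearMap ∘ₗ
          map (LinearMap.mul' k k ∘ₗ map wbar ww) LinearMap.id ∘ₗ
          (TensorProduct.assoc k H H H).symm.toLinearMap) ∘ₗ D2 k H
        = (TensorProduct.lid k H).toLinearMap ∘ₗ
            map (LinearMap.mul' k k ∘ₗ map wbar ww) LinearMap.id ∘ₗ
            ((TensorProduct.assoc k H H H).symm.toLinearMap ∘ₗ D2 k H) := rfl
      _ = (TensorProduct.lid k H).toLinearMap ∘ₗ
            map (LinearMap.mul' k k ∘ₗ map wbar ww) LinearMap.id ∘ₗ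
            (rTensor H comul ∘ₗ comul) := by rw [← CA1]
      _ = (TensorProduct.lid k H).toLinearMap ∘ₗ
            (map (LinearMap.mul' k k ∘ₗ map wbar ww) LinearMap.id ∘ₗ
              map comul LinearMap.id) ∘ₗ comul := rfl
      _ = (TensorProduct.lid k H).toLinearMap ∘ₗ
            map ((LinearMap.mul' k k ∘ₗ map wbar ww) ∘ₗ comul)
              (LinearMap.id ∘ₗ LinearMap.id) ∘ₗ comul := by
          rw [TensorProduct.map_comp]
      _ = actL (conv wbar ww) := by
          rw [LinearMap.id_comp]
          rfl
  -- `actL ε = id`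
  have hA' : actL (conv wbar ww) = LinearMap.id := by
    rw [hw2]
    apply LinearMap.ext; intro x
    have h' : map (counit (R := k)) (LinearMap.id (R := k) (M := H)) (comul x)
        = (1 : k) ⊗ₜ[k] x := Coalgebra.rTensor_counit_comul x
    simp [actL, h']
  -- put everything together
  rw [key1, hS2, hS2']
  calc (TensorProduct.comm k H H) (Lw (D2 k H χ))
      = C (D2 k H χ) := LinearMap.congr_fun h2 (D2 k H χ)
    _ = C (lTensor H (lTensor H LinearMap.id) (D2 k H χ)) := by
        simp only [lTensor_id, LinearMap.id_coe, id_eq]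
    _ = C (lTensor H (lTensor H (actL (conv wbar ww))) (D2 k H χ)) := by rw [hA']
    _ = C (lTensor H (lTensor H (contr ∘ₗ D2 k H)) (D2 k H χ)) := by rw [hA]
    _ = C ((lTensor H (lTensor H contr) ∘ₗ lTensor H (lTensor H (D2 k H))) (D2 k H χ)) := by
        rw [← lTensor_comp, ← lTensor_comp]
    _ = C (lTensor H (lTensor H contr) (D4 k H χ)) := by
        rw [hD4]; exact congrArg C (LinearMap.comp_apply _ _ _)
    _ = (C ∘ₗ lTensor H (lTensor H contr)) (D4 k H χ) := (LinearMap.comp_apply _ _ _).symm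
    _ = (Lw ∘ₗ lTensor H (lTensor H contr2) ∘ₗ rho k H ∘ₗ rho k H) (D4 k H χ) := by rw [h6]
    _ = Lw (lTensor H (lTensor H contr2) (rho k H (rho k H (D4 k H χ)))) := by
        simp only [LinearMap.comp_apply]
    _ = Lw (lTensor H (lTensor H contr2) (D4 k H χ)) := by rw [hrot, hrot]
    _ = Lw ((lTensor H (lTensor H contr2) ∘ₗ lTensor H (lTensor H (D2 k H))) (D2 k H χ)) := by
        rw [hD4]; exact (congrArg Lw (LinearMap.comp_apply _ _ _)).symm
    _ = Lw (lTensor H (lTensor H (contr2 ∘ₗ D2 k H)) (D2 k H χ)) := by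
        rw [← lTensor_comp, ← lTensor_comp]
    _ = (Lw ∘ₗ lTensor H (lTensor H (contr2 ∘ₗ D2 k H))) (D2 k H χ) :=
        (LinearMap.comp_apply _ _ _).symm
    _ = (map LinearMap.id (contr2 ∘ₗ D2 k H) ∘ₗ Lw) (D2 k H χ) := by
        rw [h3 (contr2 ∘ₗ D2 k H)]
    _ = map LinearMap.id (contr2 ∘ₗ D2 k H) (Lw (D2 k H χ)) := LinearMap.comp_apply _ _ _
end

section
/- Let H be a Hopf algebra with a copivotal form w : H → k, and let χ ∈ H be a dual trace. Set t = w(χ⁽¹⁾)·χ⁽²⁾. Then t is S-compatible, i.e., w̄(t⁽¹⁾)·S(t⁽²⁾) = w̄(t⁽¹⁾)·t⁽²⁾, if and only if χ is S-invariant, i.e., S(χ) = χ. -/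
open TensorProduct

section Aux

variable {k H : Type*} [CommSemiring k] [Semiring H] [Bialgebra k H]

lemma actL_repr (f : H →ₗ[k] k) {x : H} {ι : Type*} (r : Coalgebra.Repr k x ι) :
    actL f x = ∑ i ∈ r.index, f (r.left i) • r.right i := by
  simp only [actL, LinearMap.coe_comp, Function.comp_apply, LinearEquiv.coe_coe]
  rw [show Coalgebra.comul x = ∑ i ∈ r.index, r.left i ⊗ₜ[k] r.right i from r.eq.symm]
  simp [map_sum]

lemma conv_repr (f g : H →ₗ[k] k) {x : H} {ι : Type*} (r : Coalgebra.Repr k x ι) :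
    conv f g x = ∑ i ∈ r.index, f (r.left i) * g (r.right i) := by
  simp only [conv, LinearMap.coe_comp, Function.comp_apply]
  rw [show Coalgebra.comul x = ∑ i ∈ r.index, r.left i ⊗ₜ[k] r.right i from r.eq.symm]
  simp [map_sum]

lemma counit_smul_sum {x : H} {ι : Type*} (r : Coalgebra.Repr k x ι) :
    ∑ i ∈ r.index, (Coalgebra.counit (R := k) (r.left i)) • r.right i = x := by
  have h := Coalgebra.sum_counit_tmul_eq r
  have h2 := congrArg (TensorProduct.lid k H) h
  rw [map_sum] at h2
  simp only [TensorProduct.lid_tmul, one_smul] at h2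
  exact h2

lemma lidmap_repr (g : H →ₗ[k] k) (G : H →ₗ[k] H) {x : H} {ι : Type*} (r : Coalgebra.Repr k x ι) :
    ((TensorProduct.lid k H).toLinearMap ∘ₗ TensorProduct.map g G ∘ₗ Coalgebra.comul) x
      = ∑ i ∈ r.index, g (r.left i) • G (r.right i) := by
  simp only [LinearMap.coe_comp, Function.comp_apply, LinearEquiv.coe_coe]
  rw [show Coalgebra.comul x = ∑ i ∈ r.index, r.left i ⊗ₜ[k] r.right i from r.eq.symm]
  simp [map_sum]

/-- Key computation: if `conv f g = ε` then `g((f⇀x)⁽¹⁾) • G((f⇀x)⁽²⁾) = G x`. -/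
lemma key (f g : H →ₗ[k] k) (hfg : conv f g = Coalgebra.counit) (G : H →ₗ[k] H) (x : H) :
    ((TensorProduct.lid k H).toLinearMap ∘ₗ TensorProduct.map g G ∘ₗ Coalgebra.comul)
      (actL f x) = G x := by
  classical
  set r := Coalgebra.Repr.arbitrary k x with hr
  set a₁ : (i : H × H) → Coalgebra.Repr k (r.left i) (H × H) :=
    fun i => Coalgebra.Repr.arbitrary k (r.left i) with ha₁
  set a₂ : (i : H × H) → Coalgebra.Repr k (r.right i) (H × H) :=
    fun i => Coalgebra.Repr.arbitrary k (r.right i) with ha₂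
  have h := Coalgebra.sum_tmul_tmul_eq r a₁ a₂
  -- the linear map x ⊗ (y ⊗ z) ↦ f x • (g y • G z)
  set L : H ⊗[k] (H ⊗[k] H) →ₗ[k] H :=
    (TensorProduct.lid k H).toLinearMap ∘ₗ
      TensorProduct.map f ((TensorProduct.lid k H).toLinearMap ∘ₗ TensorProduct.map g G)
    with hL
  have hLtmul : ∀ (x y z : H), L (x ⊗ₜ[k] (y ⊗ₜ[k] z)) = f x • (g y • G z) := by
    intro x y z
    simp only [hL, LinearMap.coe_comp, Function.comp_apply, LinearEquiv.coe_coe,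
      TensorProduct.map_tmul, TensorProduct.lid_tmul]
  have h2 := congrArg L h
  simp only [map_sum, hLtmul] at h2
  -- LHS of h2 equals G x
  have hleft : ∑ i ∈ r.index, ∑ j ∈ (a₁ i).index,
      f ((a₁ i).left j) • (g ((a₁ i).right j) • G (r.right i)) = G x := by
    calc ∑ i ∈ r.index, ∑ j ∈ (a₁ i).index,
          f ((a₁ i).left j) • (g ((a₁ i).right j) • G (r.right i))
        = ∑ i ∈ r.index, (∑ j ∈ (a₁ i).index,
            f ((a₁ i).left j) * g ((a₁ i).right j)) • G (r.right i) := by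
          refine Finset.sum_congr rfl fun i _ => ?_
          rw [Finset.sum_smul]
          refine Finset.sum_congr rfl fun j _ => ?_
          rw [smul_smul]
      _ = ∑ i ∈ r.index, (conv f g (r.left i)) • G (r.right i) := by
          refine Finset.sum_congr rfl fun i _ => ?_
          rw [conv_repr f g (a₁ i)]
      _ = ∑ i ∈ r.index, (Coalgebra.counit (R := k) (r.left i)) • G (r.right i) := by
          rw [hfg]
      _ = G x := by
          conv_rhs => rw [← counit_smul_sum r]
          simp only [map_sum, map_smul]
  -- RHS of h2 equals the goal's LHS
  have hright : ((TensorProduct.lid k H).toLinearMap ∘ₗ TensorProduct.map g G ∘ₗ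
      Coalgebra.comul) (actL f x)
      = ∑ i ∈ r.index, ∑ j ∈ (a₂ i).index,
          f (r.left i) • (g ((a₂ i).left j) • G ((a₂ i).right j)) := by
    rw [actL_repr f r, map_sum]
    refine Finset.sum_congr rfl fun i _ => ?_
    rw [map_smul, lidmap_repr g G (a₂ i), Finset.smul_sum]
  rw [hright, ← h2, hleft]

end Aux

/-- Let `H` be a Hopf algebra with invertible antipode and copivotal form `w`, and let
`χ ∈ H` be a dual trace.  Set `t = w(χ⁽¹⁾)·χ⁽²⁾`.  Then `t` is S-compatible, i.e.
`w̄(t⁽¹⁾)·S(t⁽²⁾) = w̄(t⁽¹⁾)·t⁽²⁾`, if and only if `χ` is S-invariant, i.e. `S(χ) = χ`. -/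
theorem scompatible_iff_sinvariant
    {k H : Type*} [Field k] [Ring H] [HopfAlgebra k H]
    (w : H →ₐ[k] k) (wbar : H →ₗ[k] k)
    (hw1 : conv w.toLinearMap wbar = Coalgebra.counit)
    (hw2 : conv wbar w.toLinearMap = Coalgebra.counit)
    (hS2 : (HopfAlgebra.antipode k : H →ₗ[k] H) ∘ₗ HopfAlgebra.antipode k
      = actR wbar ∘ₗ actL w.toLinearMap)
    (hSbij : Function.Bijective (HopfAlgebra.antipode k : H →ₗ[k] H))
    (χ : H) (hχ : TensorProduct.comm k H H (Coalgebra.comul χ) = Coalgebra.comul χ) :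
    ((TensorProduct.lid k H).toLinearMap ∘ₗ
        TensorProduct.map wbar (HopfAlgebra.antipode k : H →ₗ[k] H) ∘ₗ Coalgebra.comul)
        (actL w.toLinearMap χ) = actL wbar (actL w.toLinearMap χ)
      ↔ (HopfAlgebra.antipode k : H →ₗ[k] H) χ = χ := by
  have h1 := key w.toLinearMap wbar hw1 (HopfAlgebra.antipode k : H →ₗ[k] H) χ
  have h2 := key w.toLinearMap wbar hw1 (LinearMap.id : H →ₗ[k] H) χ
  rw [h1]
  have : actL wbar (actL w.toLinearMap χ) = χ := by
    rw [show actL wbar = (TensorProduct.lid k H).toLinearMap ∘ₗ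
      TensorProduct.map wbar (LinearMap.id : H →ₗ[k] H) ∘ₗ Coalgebra.comul from rfl, h2]
    rfl
  rw [this]
end

section
/- Let H be a finite-dimensional Hopf algebra over a field k, ℓ ∈ H a left-integral (x·ℓ = ε(x)·ℓ for all x ∈ H), and c : H → k a left-cointegral (a left-integral in the dual Hopf algebra H*). If c(ℓ) = 1, then ℓ is non-degenerate: the bilinear form H* ⊗ H* → k, φ ⊗ ψ ↦ φ(ℓ⁽¹⁾)ψ(ℓ⁽²⁾) is non-degenerate. -/
open TensorProduct Coalgebra

section Aux

variable {k H : Type*} [Field k] [Ring H] [HopfAlgebra k H]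

lemma conv_eq_sum (f g : H →ₗ[k] k) (x : H) (r : Coalgebra.Repr k x (H × H)) :
    conv f g x = ∑ i ∈ r.index, f (r.left i) * g (r.right i) := by
  simp only [conv, LinearMap.comp_apply]
  rw [← r.eq]
  simp [map_sum]

variable (k) in
/-- The contraction map `ψ ↦ ∑ ψ(ℓ⁽²⁾) • ℓ⁽¹⁾`. -/
noncomputable def Phi {x : H} (r : Coalgebra.Repr k x (H × H)) : (H →ₗ[k] k) →ₗ[k] H where
  toFun ψ := ∑ i ∈ r.index, ψ (r.right i) • r.left i
  map_add' ψ φ := by simp [add_smul, Finset.sum_add_distrib]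
  map_smul' m ψ := by simp [Finset.smul_sum, smul_smul]

lemma Phi_pair {x : H} (r : Coalgebra.Repr k x (H × H)) (f g : H →ₗ[k] k) :
    f (Phi k r g) = ∑ i ∈ r.index, f (r.left i) * g (r.right i) := by
  simp [Phi, map_sum, map_smul, smul_eq_mul, mul_comm]

lemma conv_Phi {x : H} (r : Coalgebra.Repr k x (H × H)) (f g : H →ₗ[k] k) :
    conv f g x = f (Phi k r g) := by
  rw [conv_eq_sum f g x r, Phi_pair]

lemma comul_mul_int (ℓ : H) (hℓ : ∀ x : H, x * ℓ = Coalgebra.counit (R := k) x • ℓ) (y : H) :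
    comul (R := k) y * comul (R := k) ℓ = Coalgebra.counit (R := k) y • comul (R := k) ℓ := by
  rw [← Bialgebra.comul_mul, hℓ, map_smul]

lemma key_switch (ℓ : H) (hℓ : ∀ x : H, x * ℓ = Coalgebra.counit (R := k) x • ℓ) (x : H) :
    (1 ⊗ₜ[k] x) * comul (R := k) ℓ =
      (HopfAlgebra.antipode (R := k) x ⊗ₜ[k] 1) * comul (R := k) ℓ := by
  set S : H →ₗ[k] H := HopfAlgebra.antipode (R := k) with hS
  let rx : Coalgebra.Repr k x (H × H) := ℛ k x
  let a₁ : ∀ i : rx.ι, Coalgebra.Repr k (rx.left i) (H × H) := fun i => ℛ k (rx.left i)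
  let a₂ : ∀ i : rx.ι, Coalgebra.Repr k (rx.right i) (H × H) := fun i => ℛ k (rx.right i)
  have hx1 : ∑ i ∈ rx.index, Coalgebra.counit (R := k) (rx.left i) • rx.right i = x := by
    have h := Coalgebra.sum_counit_tmul_eq rx
    apply_fun (TensorProduct.lid k H) at h
    simp only [map_sum, TensorProduct.lid_tmul, one_smul] at h
    exact h
  have hx2 : ∑ i ∈ rx.index, Coalgebra.counit (R := k) (rx.right i) • rx.left i = x := by
    have h := Coalgebra.sum_tmul_counit_eq rx
    apply_fun (TensorProduct.rid k H) at h
    simp only [map_sum, TensorProduct.rid_tmul, one_smul] at h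
    exact h
  have claimC : ∑ i ∈ rx.index, (S (rx.left i) ⊗ₜ[k] (1 : H)) * comul (R := k) (rx.right i)
      = (1 : H) ⊗ₜ[k] x := by
    classical
    have coas := Coalgebra.sum_tmul_tmul_eq rx a₁ a₂
    let Θ₂ : H ⊗[k] (H ⊗[k] H) →ₗ[k] H ⊗[k] H :=
      (LinearMap.rTensor H (LinearMap.mul' k H ∘ₗ LinearMap.rTensor H S)) ∘ₗ
        (TensorProduct.assoc k H H H).symm.toLinearMap
    have himg := congrArg Θ₂ coas
    simp only [Θ₂, map_sum, LinearMap.comp_apply, LinearEquiv.coe_coe,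
      TensorProduct.assoc_symm_tmul, LinearMap.rTensor_tmul, LinearMap.mul'_apply] at himg
    calc ∑ i ∈ rx.index, (S (rx.left i) ⊗ₜ[k] (1:H)) * comul (R := k) (rx.right i)
        = ∑ i ∈ rx.index, ∑ j ∈ (a₂ i).index,
            (S (rx.left i) * (a₂ i).left j) ⊗ₜ[k] (a₂ i).right j := by
          refine Finset.sum_congr rfl fun i _ => ?_
          rw [← (a₂ i).eq, Finset.mul_sum]
          simp [Algebra.TensorProduct.tmul_mul_tmul]
      _ = ∑ i ∈ rx.index, ∑ j ∈ (a₁ i).index,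
            (S ((a₁ i).left j) * (a₁ i).right j) ⊗ₜ[k] rx.right i := himg.symm
      _ = ∑ i ∈ rx.index,
            (Coalgebra.counit (R := k) (rx.left i) • (1:H)) ⊗ₜ[k] rx.right i := by
          refine Finset.sum_congr rfl fun i _ => ?_
          rw [← TensorProduct.sum_tmul, HopfAlgebra.sum_antipode_mul_eq_smul (a₁ i)]
      _ = (1:H) ⊗ₜ[k] (∑ i ∈ rx.index, Coalgebra.counit (R := k) (rx.left i) • rx.right i) := by
          rw [TensorProduct.tmul_sum]
          refine Finset.sum_congr rfl fun i _ => ?_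
          rw [TensorProduct.smul_tmul]
      _ = (1:H) ⊗ₜ[k] x := by rw [hx1]
  have hSx : S x = ∑ i ∈ rx.index,
      Coalgebra.counit (R := k) (rx.right i) • S (rx.left i) := by
    have h := congrArg S hx2
    rw [map_sum] at h
    simp only [map_smul] at h
    exact h.symm
  have main : (S x ⊗ₜ[k] (1:H)) * comul (R := k) ℓ = ((1:H) ⊗ₜ[k] x) * comul (R := k) ℓ := by
    calc (S x ⊗ₜ[k] (1:H)) * comul (R := k) ℓ
        = ∑ i ∈ rx.index,
            ((Coalgebra.counit (R := k) (rx.right i) • S (rx.left i)) ⊗ₜ[k] (1:H))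
              * comul (R := k) ℓ := by
          rw [hSx, TensorProduct.sum_tmul, Finset.sum_mul]
      _ = ∑ i ∈ rx.index,
            ((S (rx.left i) ⊗ₜ[k] (1:H)) * comul (R := k) (rx.right i)) * comul (R := k) ℓ := by
          refine Finset.sum_congr rfl fun i _ => ?_
          rw [← TensorProduct.smul_tmul', smul_mul_assoc, ← mul_smul_comm,
            ← comul_mul_int ℓ hℓ (rx.right i), ← mul_assoc]
      _ = (∑ i ∈ rx.index, (S (rx.left i) ⊗ₜ[k] (1:H)) * comul (R := k) (rx.right i))
            * comul (R := k) ℓ := by rw [Finset.sum_mul]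
      _ = ((1:H) ⊗ₜ[k] x) * comul (R := k) ℓ := by rw [claimC]
  exact main.symm


lemma Phi_mulLeft (ℓ : H) (hℓ : ∀ x : H, x * ℓ = Coalgebra.counit (R := k) x • ℓ)
    (r : Coalgebra.Repr k ℓ (H × H)) (ψ : H →ₗ[k] k) (x : H) :
    Phi k r (ψ ∘ₗ LinearMap.mulLeft k x) = HopfAlgebra.antipode (R := k) x * Phi k r ψ := by
  set S : H →ₗ[k] H := HopfAlgebra.antipode (R := k) with hS
  have h1 : ∑ i ∈ r.index, r.left i ⊗ₜ[k] (x * r.right i)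
      = ∑ i ∈ r.index, (S x * r.left i) ⊗ₜ[k] r.right i := by
    calc ∑ i ∈ r.index, r.left i ⊗ₜ[k] (x * r.right i)
        = ((1:H) ⊗ₜ[k] x) * comul (R := k) ℓ := by
          rw [← r.eq, Finset.mul_sum]
          exact Finset.sum_congr rfl fun i _ => by
            rw [Algebra.TensorProduct.tmul_mul_tmul, one_mul]
      _ = (S x ⊗ₜ[k] (1:H)) * comul (R := k) ℓ := key_switch ℓ hℓ x
      _ = ∑ i ∈ r.index, (S x * r.left i) ⊗ₜ[k] r.right i := by
          rw [← r.eq, Finset.mul_sum]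
          exact Finset.sum_congr rfl fun i _ => by
            rw [Algebra.TensorProduct.tmul_mul_tmul, one_mul]
  have h2 := congrArg (fun u => (TensorProduct.rid k H) ((LinearMap.lTensor H ψ) u)) h1
  simp only [map_sum, LinearMap.lTensor_tmul, TensorProduct.rid_tmul] at h2
  calc Phi k r (ψ ∘ₗ LinearMap.mulLeft k x)
      = ∑ i ∈ r.index, ψ (x * r.right i) • r.left i := by
        simp [Phi, LinearMap.mulLeft_apply]
    _ = ∑ i ∈ r.index, ψ (r.right i) • (S x * r.left i) := h2
    _ = S x * Phi k r ψ := by simp [Phi, Finset.mul_sum, mul_smul_comm]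


lemma eval_one_eq_zero [FiniteDimensional k H] (ℓ : H) (r : Coalgebra.Repr k ℓ (H × H))
    (c : H →ₗ[k] k) (hcl : c ℓ = 1) (χ : H →ₗ[k] k)
    (hχ : ∀ y : H, Phi k r (χ ∘ₗ LinearMap.mulLeft k y) = 0) : χ 1 = 0 := by
  classical
  set S : H →ₗ[k] H := HopfAlgebra.antipode (R := k) with hS
  let e := Module.finBasis k H
  let a₁ : ∀ i : r.ι, Coalgebra.Repr k (r.left i) (H × H) := fun i => ℛ k (r.left i)
  let a₂ : ∀ i : r.ι, Coalgebra.Repr k (r.right i) (H × H) := fun i => ℛ k (r.right i)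
  have coas := Coalgebra.sum_tmul_tmul_eq r a₁ a₂
  let Θ : H ⊗[k] (H ⊗[k] H) →ₗ[k] k :=
    LinearMap.mul' k k ∘ₗ
      TensorProduct.map c (χ ∘ₗ LinearMap.mul' k H ∘ₗ LinearMap.rTensor H S)
  have himg := congrArg Θ coas
  simp only [Θ, map_sum, LinearMap.comp_apply, TensorProduct.map_tmul,
    LinearMap.rTensor_tmul, LinearMap.mul'_apply] at himg
  -- himg : ∑ i ∑ j, c ((a₁ i).left j) * χ (S ((a₁ i).right j) * r.right i)
  --      = ∑ i ∑ j, c (r.left i) * χ (S ((a₂ i).left j) * (a₂ i).right j)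
  have hℓsum : ∑ i ∈ r.index, Coalgebra.counit (R := k) (r.right i) • r.left i = ℓ := by
    have h := Coalgebra.sum_tmul_counit_eq r
    apply_fun (TensorProduct.rid k H) at h
    simp only [map_sum, TensorProduct.rid_tmul, one_smul] at h
    exact h
  have hRHS : ∑ i ∈ r.index, ∑ j ∈ (a₂ i).index,
      c (r.left i) * χ (S ((a₂ i).left j) * (a₂ i).right j) = χ 1 := by
    calc ∑ i ∈ r.index, ∑ j ∈ (a₂ i).index,
        c (r.left i) * χ (S ((a₂ i).left j) * (a₂ i).right j)
        = ∑ i ∈ r.index, Coalgebra.counit (R := k) (r.right i) * c (r.left i) * χ 1 := by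
          refine Finset.sum_congr rfl fun i _ => ?_
          rw [← Finset.mul_sum, ← map_sum χ (fun j => S ((a₂ i).left j) * (a₂ i).right j)
            (a₂ i).index, HopfAlgebra.sum_antipode_mul_eq_smul (a₂ i)]
          rw [map_smul, smul_eq_mul]
          ring
      _ = c ℓ * χ 1 := by
          have hcℓ : ∑ i ∈ r.index, Coalgebra.counit (R := k) (r.right i) * c (r.left i)
              = c ℓ := by
            have h := congrArg c hℓsum
            rw [map_sum] at h
            simpa [smul_eq_mul] using h
          rw [← hcℓ, Finset.sum_mul]
      _ = χ 1 := by rw [hcl, one_mul]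
  have hexp : ∀ p b : H, χ (S p * b) = ∑ m, e.repr p m * χ (S (e m) * b) := by
    intro p b
    conv_lhs => rw [← Module.Basis.sum_repr e p]
    rw [map_sum, Finset.sum_mul, map_sum]
    refine Finset.sum_congr rfl fun m _ => ?_
    rw [map_smul, smul_mul_assoc, map_smul, smul_eq_mul]
  have hLHS : ∑ i ∈ r.index, ∑ j ∈ (a₁ i).index,
      c ((a₁ i).left j) * χ (S ((a₁ i).right j) * r.right i) = 0 := by
    calc ∑ i ∈ r.index, ∑ j ∈ (a₁ i).index,
        c ((a₁ i).left j) * χ (S ((a₁ i).right j) * r.right i)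
        = ∑ i ∈ r.index, ∑ m, (∑ j ∈ (a₁ i).index,
            c ((a₁ i).left j) * e.repr ((a₁ i).right j) m) * χ (S (e m) * r.right i) := by
          refine Finset.sum_congr rfl fun i _ => ?_
          calc ∑ j ∈ (a₁ i).index, c ((a₁ i).left j) * χ (S ((a₁ i).right j) * r.right i)
              = ∑ j ∈ (a₁ i).index, ∑ m, c ((a₁ i).left j) *
                  (e.repr ((a₁ i).right j) m * χ (S (e m) * r.right i)) := by
                refine Finset.sum_congr rfl fun j _ => ?_
                rw [hexp, Finset.mul_sum]
            _ = ∑ m, (∑ j ∈ (a₁ i).index,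
                  c ((a₁ i).left j) * e.repr ((a₁ i).right j) m) * χ (S (e m) * r.right i) := by
                rw [Finset.sum_comm]
                refine Finset.sum_congr rfl fun m _ => ?_
                rw [Finset.sum_mul]
                exact Finset.sum_congr rfl fun j _ => (mul_assoc _ _ _).symm
      _ = ∑ m, ∑ i ∈ r.index, (conv c (e.coord m)) (r.left i) *
            ((χ ∘ₗ LinearMap.mulLeft k (S (e m))) (r.right i)) := by
          rw [Finset.sum_comm]
          refine Finset.sum_congr rfl fun m _ => Finset.sum_congr rfl fun i _ => ?_
          rw [conv_eq_sum c (e.coord m) (r.left i) (a₁ i)]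
          simp [Module.Basis.coord_apply]
      _ = ∑ m, (conv c (e.coord m)) (Phi k r (χ ∘ₗ LinearMap.mulLeft k (S (e m)))) := by
          exact Finset.sum_congr rfl fun m _ => (Phi_pair r _ _).symm
      _ = 0 := by simp [hχ]
  exact hRHS.symm.trans (himg.symm.trans hLHS)

end Aux

/-- Let `H` be a finite-dimensional Hopf algebra over a field `k`, `ℓ ∈ H` a left-integral
(`x·ℓ = ε(x)·ℓ`), and `c : H → k` a left-cointegral (a left-integral of the dual Hopf
algebra, i.e. `φ * c = φ(1)·c` for every linear form `φ`).  If `c(ℓ) = 1`, then `ℓ` is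
non-degenerate: the bilinear form `H* ⊗ H* → k`, `φ ⊗ ψ ↦ φ(ℓ⁽¹⁾)ψ(ℓ⁽²⁾)`, is
non-degenerate. -/
theorem left_integral_nondegenerate
    {k H : Type*} [Field k] [Ring H] [HopfAlgebra k H] [FiniteDimensional k H]
    (ℓ : H) (hℓ : ∀ x : H, x * ℓ = Coalgebra.counit (R := k) x • ℓ)
    (c : H →ₗ[k] k) (hc : ∀ φ : H →ₗ[k] k, conv φ c = φ 1 • c)
    (hcl : c ℓ = 1) :
    (∀ φ : H →ₗ[k] k, (∀ ψ : H →ₗ[k] k, conv φ ψ ℓ = 0) → φ = 0) ∧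
    (∀ ψ : H →ₗ[k] k, (∀ φ : H →ₗ[k] k, conv φ ψ ℓ = 0) → ψ = 0) := by
  classical
  let r : Coalgebra.Repr k ℓ (H × H) := ℛ k ℓ
  have core : ∀ ψ : H →ₗ[k] k, Phi k r ψ = 0 → ψ = 0 := by
    intro ψ h0
    ext x
    simp only [LinearMap.zero_apply]
    have hx : ψ x = (ψ ∘ₗ LinearMap.mulLeft k x) 1 := by simp
    rw [hx]
    refine eval_one_eq_zero ℓ r c hcl (ψ ∘ₗ LinearMap.mulLeft k x) (fun y => ?_)
    have hcomp : (ψ ∘ₗ LinearMap.mulLeft k x) ∘ₗ LinearMap.mulLeft k y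
        = ψ ∘ₗ LinearMap.mulLeft k (x * y) := by
      ext z; simp [mul_assoc]
    rw [hcomp, Phi_mulLeft ℓ hℓ r ψ (x * y), h0, mul_zero]
  constructor
  · intro φ hφ
    have hinj : Function.Injective (Phi k r) := by
      intro ψ₁ ψ₂ h12
      have hz : Phi k r (ψ₁ - ψ₂) = 0 := by rw [map_sub, h12, sub_self]
      exact sub_eq_zero.mp (core _ hz)
    have hfr : Module.finrank k (H →ₗ[k] k) = Module.finrank k H :=
      Subspace.dual_finrank_eq
    have hsurj : Function.Surjective (Phi k r) :=
      (LinearMap.injective_iff_surjective_of_finrank_eq_finrank hfr).mp hinj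
    ext x
    simp only [LinearMap.zero_apply]
    obtain ⟨ψ, hψ⟩ := hsurj x
    rw [← hψ, ← conv_Phi r φ ψ]
    exact hφ ψ
  · intro ψ hψ
    apply core
    rw [← Module.forall_dual_apply_eq_zero_iff (R := k)]
    intro φ
    rw [← conv_Phi r φ ψ]
    exact hψ φ
end

section
/- Let H be a Hopf algebra with copivotal form w and convolution inverse w̄, and let ℓ ∈ H be a dual quantum trace (Δᵒᵖ(ℓ) = (id ⊗ S²)Δ(ℓ)). Then χ := w̄(ℓ⁽¹⁾)·ℓ⁽²⁾ is a dual trace: Δᵒᵖ(χ) = Δ(χ). -/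
open TensorProduct

section Aux
variable {k H : Type*} [CommSemiring k] [Semiring H] [Bialgebra k H]

lemma aux_comul_actL (f : H →ₗ[k] k) :
    (Coalgebra.comul : H →ₗ[k] H ⊗[k] H) ∘ₗ actL f
      = TensorProduct.map (actL f) LinearMap.id ∘ₗ Coalgebra.comul := by
  have e1 : (Coalgebra.comul ∘ₗ (TensorProduct.lid k H).toLinearMap
        ∘ₗ TensorProduct.map f LinearMap.id : H ⊗[k] H →ₗ[k] H ⊗[k] H)
      = (TensorProduct.lid k (H ⊗[k] H)).toLinearMap
        ∘ₗ TensorProduct.map f LinearMap.id ∘ₗ LinearMap.lTensor H Coalgebra.comul := by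
    apply TensorProduct.ext'; intro x y; simp
  have e2 : ((TensorProduct.lid k (H ⊗[k] H)).toLinearMap
        ∘ₗ TensorProduct.map f LinearMap.id
        ∘ₗ (TensorProduct.assoc k H H H).toLinearMap :
        (H ⊗[k] H) ⊗[k] H →ₗ[k] H ⊗[k] H)
      = TensorProduct.map ((TensorProduct.lid k H).toLinearMap
          ∘ₗ TensorProduct.map f LinearMap.id) LinearMap.id := by
    apply TensorProduct.ext_threefold; intro x y z
    simp [TensorProduct.smul_tmul']
  ext x
  have h3 := Coalgebra.coassoc_apply (R := k) (A := H) x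
  calc (Coalgebra.comul : H →ₗ[k] H ⊗[k] H) (actL f x)
      = (Coalgebra.comul ∘ₗ (TensorProduct.lid k H).toLinearMap
          ∘ₗ TensorProduct.map f LinearMap.id) (Coalgebra.comul x) := rfl
    _ = (TensorProduct.lid k (H ⊗[k] H)).toLinearMap
          (TensorProduct.map f LinearMap.id
            (LinearMap.lTensor H Coalgebra.comul (Coalgebra.comul x))) := by
        rw [e1]; rfl
    _ = (TensorProduct.lid k (H ⊗[k] H)).toLinearMap
          (TensorProduct.map f LinearMap.id
            ((TensorProduct.assoc k H H H)
              (LinearMap.rTensor H Coalgebra.comul (Coalgebra.comul x)))) := by rw [h3]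
    _ = TensorProduct.map ((TensorProduct.lid k H).toLinearMap
          ∘ₗ TensorProduct.map f LinearMap.id) LinearMap.id
          (LinearMap.rTensor H Coalgebra.comul (Coalgebra.comul x)) := by
        rw [← e2]; rfl
    _ = (TensorProduct.map (actL f) LinearMap.id ∘ₗ Coalgebra.comul) x := by
        have hm := TensorProduct.map_comp
          (f₂ := (TensorProduct.lid k H).toLinearMap ∘ₗ TensorProduct.map f LinearMap.id)
          (f₁ := Coalgebra.comul) (g₂ := (LinearMap.id : H →ₗ[k] H)) (g₁ := LinearMap.id)
        simp only [LinearMap.id_comp] at hm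
        rw [actL, LinearMap.comp_apply, ← LinearMap.comp_assoc, hm]
        rfl

lemma aux_comul_actR (f : H →ₗ[k] k) :
    (Coalgebra.comul : H →ₗ[k] H ⊗[k] H) ∘ₗ actR f
      = TensorProduct.map LinearMap.id (actR f) ∘ₗ Coalgebra.comul := by
  have e1 : (Coalgebra.comul ∘ₗ (TensorProduct.rid k H).toLinearMap
        ∘ₗ TensorProduct.map LinearMap.id f : H ⊗[k] H →ₗ[k] H ⊗[k] H)
      = (TensorProduct.rid k (H ⊗[k] H)).toLinearMap
        ∘ₗ TensorProduct.map LinearMap.id f ∘ₗ LinearMap.rTensor H Coalgebra.comul := by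
    apply TensorProduct.ext'; intro x y; simp
  have e2 : ((TensorProduct.rid k (H ⊗[k] H)).toLinearMap
        ∘ₗ TensorProduct.map LinearMap.id f
        ∘ₗ (TensorProduct.assoc k H H H).symm.toLinearMap :
        H ⊗[k] (H ⊗[k] H) →ₗ[k] H ⊗[k] H)
      = TensorProduct.map LinearMap.id ((TensorProduct.rid k H).toLinearMap
          ∘ₗ TensorProduct.map LinearMap.id f) := by
    apply (LinearMap.cancel_right (TensorProduct.assoc k H H H).surjective).mp
    apply TensorProduct.ext_threefold; intro x y z
    simp [TensorProduct.smul_tmul']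
  ext x
  have h3 := Coalgebra.coassoc_symm_apply (R := k) (A := H) x
  calc (Coalgebra.comul : H →ₗ[k] H ⊗[k] H) (actR f x)
      = (Coalgebra.comul ∘ₗ (TensorProduct.rid k H).toLinearMap
          ∘ₗ TensorProduct.map LinearMap.id f) (Coalgebra.comul x) := rfl
    _ = (TensorProduct.rid k (H ⊗[k] H)).toLinearMap
          (TensorProduct.map LinearMap.id f
            (LinearMap.rTensor H Coalgebra.comul (Coalgebra.comul x))) := by
        rw [e1]; rfl
    _ = (TensorProduct.rid k (H ⊗[k] H)).toLinearMap
          (TensorProduct.map LinearMap.id f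
            ((TensorProduct.assoc k H H H).symm
              (LinearMap.lTensor H Coalgebra.comul (Coalgebra.comul x)))) := by rw [h3]
    _ = TensorProduct.map LinearMap.id ((TensorProduct.rid k H).toLinearMap
          ∘ₗ TensorProduct.map LinearMap.id f)
          (LinearMap.lTensor H Coalgebra.comul (Coalgebra.comul x)) := by
        rw [← e2]; rfl
    _ = (TensorProduct.map LinearMap.id (actR f) ∘ₗ Coalgebra.comul) x := by
        have hm := TensorProduct.map_comp (f₂ := (LinearMap.id : H →ₗ[k] H)) (f₁ := LinearMap.id)
          (g₂ := (TensorProduct.rid k H).toLinearMap ∘ₗ TensorProduct.map LinearMap.id f)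
          (g₁ := Coalgebra.comul)
        simp only [LinearMap.id_comp] at hm
        rw [actR, LinearMap.comp_apply, ← LinearMap.comp_assoc, hm]
        rfl

lemma aux_fL (f g : H →ₗ[k] k) : f ∘ₗ actL g = conv g f := by
  ext x
  exact LinearMap.congr_fun (TensorProduct.ext' (fun a b => by
      simp [LinearMap.mul'_apply, smul_eq_mul, mul_comm]) :
    (f ∘ₗ (TensorProduct.lid k H).toLinearMap ∘ₗ TensorProduct.map g LinearMap.id :
        H ⊗[k] H →ₗ[k] k)
      = LinearMap.mul' k k ∘ₗ TensorProduct.map g f) (Coalgebra.comul x)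

lemma aux_fR (f g : H →ₗ[k] k) : f ∘ₗ actR g = conv f g := by
  ext x
  exact LinearMap.congr_fun (TensorProduct.ext' (fun a b => by
      simp [LinearMap.mul'_apply, smul_eq_mul, mul_comm]) :
    (f ∘ₗ (TensorProduct.rid k H).toLinearMap ∘ₗ TensorProduct.map LinearMap.id g :
        H ⊗[k] H →ₗ[k] k)
      = LinearMap.mul' k k ∘ₗ TensorProduct.map f g) (Coalgebra.comul x)

lemma aux_actL_counit : actL (Coalgebra.counit : H →ₗ[k] k) = LinearMap.id := by
  ext x
  have h := Coalgebra.rTensor_counit_comul (R := k) x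
  show (TensorProduct.lid k H) (TensorProduct.map Coalgebra.counit LinearMap.id
    (Coalgebra.comul x)) = x
  have : TensorProduct.map (Coalgebra.counit : H →ₗ[k] k) LinearMap.id
      = LinearMap.rTensor H Coalgebra.counit := rfl
  rw [this, h]
  simp

lemma aux_conv_counit_l (f : H →ₗ[k] k) : conv Coalgebra.counit f = f := by
  ext x
  have e : (LinearMap.mul' k k ∘ₗ TensorProduct.map (Coalgebra.counit : H →ₗ[k] k) f :
      H ⊗[k] H →ₗ[k] k) = f ∘ₗ (TensorProduct.lid k H).toLinearMap
        ∘ₗ LinearMap.rTensor H Coalgebra.counit := by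
    apply TensorProduct.ext'; intro a b
    simp [LinearMap.mul'_apply, smul_eq_mul]
  show (LinearMap.mul' k k) (TensorProduct.map Coalgebra.counit f (Coalgebra.comul x)) = f x
  rw [show (LinearMap.mul' k k) (TensorProduct.map (Coalgebra.counit : H →ₗ[k] k) f
      (Coalgebra.comul x)) = (f ∘ₗ (TensorProduct.lid k H).toLinearMap
        ∘ₗ LinearMap.rTensor H Coalgebra.counit) (Coalgebra.comul x)
    from LinearMap.congr_fun e (Coalgebra.comul x)]
  rw [LinearMap.comp_apply, LinearMap.comp_apply, Coalgebra.rTensor_counit_comul]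
  simp

lemma aux_LR (f g : H →ₗ[k] k) : actL f ∘ₗ actR g = actR g ∘ₗ actL f := by
  ext x
  have h := LinearMap.congr_fun (aux_comul_actR (k := k) (H := H) g) x
  have E : ((TensorProduct.lid k H).toLinearMap ∘ₗ TensorProduct.map f LinearMap.id
        ∘ₗ TensorProduct.map LinearMap.id (actR g) : H ⊗[k] H →ₗ[k] H)
      = actR g ∘ₗ (TensorProduct.lid k H).toLinearMap
        ∘ₗ TensorProduct.map f LinearMap.id := by
    apply TensorProduct.ext'; intro a b; simp
  show (TensorProduct.lid k H) (TensorProduct.map f LinearMap.id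
      (Coalgebra.comul (actR g x))) = actR g (actL f x)
  rw [show Coalgebra.comul (actR g x)
      = TensorProduct.map LinearMap.id (actR g) (Coalgebra.comul x) from h]
  exact LinearMap.congr_fun E (Coalgebra.comul x)

lemma aux_LL (f g : H →ₗ[k] k) : actL f ∘ₗ actL g = actL (conv g f) := by
  ext x
  have h := LinearMap.congr_fun (aux_comul_actL (k := k) (H := H) g) x
  have E : ((TensorProduct.lid k H).toLinearMap ∘ₗ TensorProduct.map f LinearMap.id
        ∘ₗ TensorProduct.map (actL g) LinearMap.id : H ⊗[k] H →ₗ[k] H)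
      = (TensorProduct.lid k H).toLinearMap
        ∘ₗ TensorProduct.map (f ∘ₗ actL g) LinearMap.id := by
    apply TensorProduct.ext'; intro a b; simp
  rw [aux_fL] at E
  show (TensorProduct.lid k H) (TensorProduct.map f LinearMap.id
      (Coalgebra.comul (actL g x))) = actL (conv g f) x
  rw [show Coalgebra.comul (actL g x)
      = TensorProduct.map (actL g) LinearMap.id (Coalgebra.comul x) from h]
  exact LinearMap.congr_fun E (Coalgebra.comul x)

end Aux

/-- Let `H` be a Hopf algebra with invertible antipode and copivotal form `w` with
convolution inverse `w̄`, and let `ℓ ∈ H` be a dual quantum trace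
(`Δᵒᵖ(ℓ) = (id ⊗ S²)Δ(ℓ)`).  Then `χ := w̄(ℓ⁽¹⁾)·ℓ⁽²⁾` is a dual trace: `Δᵒᵖ(χ) = Δ(χ)`. -/
theorem dual_quantum_trace_gives_dual_trace
    {k H : Type*} [Field k] [Ring H] [HopfAlgebra k H]
    (w : H →ₐ[k] k) (wbar : H →ₗ[k] k)
    (hw1 : conv w.toLinearMap wbar = Coalgebra.counit)
    (hw2 : conv wbar w.toLinearMap = Coalgebra.counit)
    (hS2 : (HopfAlgebra.antipode k : H →ₗ[k] H) ∘ₗ HopfAlgebra.antipode k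
      = actR wbar ∘ₗ actL w.toLinearMap)
    (hSbij : Function.Bijective (HopfAlgebra.antipode k : H →ₗ[k] H))
    (ℓ : H)
    (hℓ : TensorProduct.comm k H H (Coalgebra.comul ℓ) =
      TensorProduct.map LinearMap.id
        ((HopfAlgebra.antipode k : H →ₗ[k] H) ∘ₗ HopfAlgebra.antipode k) (Coalgebra.comul ℓ)) :
    TensorProduct.comm k H H (Coalgebra.comul (actL wbar ℓ)) =
      Coalgebra.comul (actL wbar ℓ) := by
  rw [hS2] at hℓ
  set S2 : H →ₗ[k] H := actR wbar ∘ₗ actL w.toLinearMap with hS2def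
  -- w̄ ∘ S² = w̄
  have h5 : wbar ∘ₗ S2 = wbar := by
    rw [hS2def, ← aux_LR, ← LinearMap.comp_assoc, aux_fL, hw1, aux_fR, aux_conv_counit_l]
  -- actL w̄ ∘ S² = actR w̄
  have h6 : actL wbar ∘ₗ S2 = actR wbar := by
    rw [hS2def, ← aux_LR, ← LinearMap.comp_assoc, aux_LL, hw1, aux_actL_counit (k := k) (H := H),
      LinearMap.id_comp]
  -- Step B : comul χ = comul (actR w̄ ℓ)
  have hB : Coalgebra.comul (R := k) (actL wbar ℓ) = Coalgebra.comul (R := k) (actR wbar ℓ) := by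
    have EB1 : ((TensorProduct.rid k (H ⊗[k] H)).toLinearMap
          ∘ₗ TensorProduct.map Coalgebra.comul wbar
          ∘ₗ (TensorProduct.comm k H H).toLinearMap : H ⊗[k] H →ₗ[k] H ⊗[k] H)
        = Coalgebra.comul ∘ₗ (TensorProduct.lid k H).toLinearMap
          ∘ₗ TensorProduct.map wbar LinearMap.id := by
      apply TensorProduct.ext'; intro a b; simp
    have EB2 : ((TensorProduct.rid k (H ⊗[k] H)).toLinearMap
          ∘ₗ TensorProduct.map Coalgebra.comul wbar : H ⊗[k] H →ₗ[k] H ⊗[k] H)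
        = Coalgebra.comul ∘ₗ (TensorProduct.rid k H).toLinearMap
          ∘ₗ TensorProduct.map LinearMap.id wbar := by
      apply TensorProduct.ext'; intro a b; simp
    have e := congrArg (fun z => (TensorProduct.rid k (H ⊗[k] H))
        (TensorProduct.map Coalgebra.comul wbar z)) hℓ
    have eL : (TensorProduct.rid k (H ⊗[k] H))
        (TensorProduct.map Coalgebra.comul wbar
          ((TensorProduct.comm k H H) (Coalgebra.comul ℓ)))
        = Coalgebra.comul (actL wbar ℓ) :=
      LinearMap.congr_fun EB1 (Coalgebra.comul ℓ)
    have hz : TensorProduct.map (Coalgebra.comul : H →ₗ[k] H ⊗[k] H) wbar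
          ∘ₗ TensorProduct.map LinearMap.id S2
        = TensorProduct.map Coalgebra.comul wbar := by
      rw [← TensorProduct.map_comp, LinearMap.comp_id, h5]
    have eR : (TensorProduct.rid k (H ⊗[k] H))
        (TensorProduct.map Coalgebra.comul wbar
          (TensorProduct.map LinearMap.id S2 (Coalgebra.comul ℓ)))
        = Coalgebra.comul (actR wbar ℓ) := by
      rw [show TensorProduct.map Coalgebra.comul wbar
            (TensorProduct.map LinearMap.id S2 (Coalgebra.comul ℓ))
          = TensorProduct.map Coalgebra.comul wbar (Coalgebra.comul ℓ)
        from LinearMap.congr_fun hz (Coalgebra.comul ℓ)]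
      exact LinearMap.congr_fun EB2 (Coalgebra.comul ℓ)
    rw [← eL, ← eR, e]
  -- Step A
  have EA1 : ((TensorProduct.comm k H H).toLinearMap
        ∘ₗ TensorProduct.map (actL wbar) LinearMap.id : H ⊗[k] H →ₗ[k] H ⊗[k] H)
      = TensorProduct.map LinearMap.id (actL wbar)
        ∘ₗ (TensorProduct.comm k H H).toLinearMap := by
    apply TensorProduct.ext'; intro a b; simp
  have h1 := LinearMap.congr_fun (aux_comul_actL (k := k) (H := H) wbar) ℓ
  have h2 := LinearMap.congr_fun (aux_comul_actR (k := k) (H := H) wbar) ℓ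
  simp only [LinearMap.comp_apply] at h1 h2
  calc (TensorProduct.comm k H H) (Coalgebra.comul (actL wbar ℓ))
      = (TensorProduct.comm k H H)
          (TensorProduct.map (actL wbar) LinearMap.id (Coalgebra.comul ℓ)) := by rw [h1]
    _ = TensorProduct.map LinearMap.id (actL wbar)
          ((TensorProduct.comm k H H) (Coalgebra.comul ℓ)) :=
        LinearMap.congr_fun EA1 (Coalgebra.comul ℓ)
    _ = TensorProduct.map LinearMap.id (actL wbar)
          (TensorProduct.map LinearMap.id S2 (Coalgebra.comul ℓ)) := by rw [hℓ]
    _ = TensorProduct.map LinearMap.id (actR wbar) (Coalgebra.comul ℓ) := by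
        have hc : TensorProduct.map (LinearMap.id : H →ₗ[k] H) (actL wbar)
              ∘ₗ TensorProduct.map LinearMap.id S2
            = TensorProduct.map LinearMap.id (actR wbar) := by
          rw [← TensorProduct.map_comp, h6, LinearMap.id_comp]
        exact LinearMap.congr_fun hc (Coalgebra.comul ℓ)
    _ = Coalgebra.comul (actR wbar ℓ) := h2.symm
    _ = Coalgebra.comul (actL wbar ℓ) := hB.symm
end
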